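/- Let A, B be c×d real matrices, let x₀, u₁, …, u_d, ∈ ℝ^d, and suppose the unit vectors b_i = (u_i - x₀)/‖u_i - x₀‖ satisfy |⟨b_i,b_j⟩| ≤ α/d for i ≠ j with 0 < α < 1. If ‖(A - B)b_i‖ ≤ ε' for every i, then the operator norm ‖A - B‖ ≤ d(1-α)^{-1/2} ε'. -/

import Mathlib

noncomputable def matOpNorm {c d : ℕ} (A : Matrix (Fin c) (Fin d) ℝ) : ℝ :=
  ‖(Matrix.toEuclideanLin A).toContinuousLinearMap‖

private lemma aux_key {d : ℕ} {α : ℝ} (hα0 : 0 ≤ α) (hd : 0 < d)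
    (b : Fin d → EuclideanSpace ℝ (Fin d)) (hb : ∀ i, ‖b i‖ = 1)
    (hip : ∀ i j, i ≠ j → |(inner ℝ (b i) (b j) : ℝ)| ≤ α / d)
    (c : Fin d → ℝ) :
    (1 - α) * ∑ i, c i ^ 2 ≤ ‖∑ i, c i • b i‖ ^ 2 := by
  classical
  set ip : Fin d → Fin d → ℝ := fun i j => (inner ℝ (b i) (b j) : ℝ) with hipdef
  have hd' : (d : ℝ) ≠ 0 := Nat.cast_ne_zero.mpr hd.ne'
  have hdiag : ∀ i, ip i i = 1 := by
    intro i
    show (inner ℝ (b i) (b i) : ℝ) = 1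
    rw [real_inner_self_eq_norm_sq, hb i]; norm_num
  have expand : ‖∑ i, c i • b i‖ ^ 2 = ∑ i, ∑ j, c i * c j * ip i j := by
    rw [← real_inner_self_eq_norm_sq, sum_inner]
    simp only [inner_sum, real_inner_smul_left, real_inner_smul_right]
    exact Finset.sum_congr rfl fun i _ => Finset.sum_congr rfl fun j _ => by ring
  have hsplit : ∀ i : Fin d, ∑ j, c i * c j * ip i j
      = c i ^ 2 + ∑ j ∈ Finset.univ.erase i, c i * c j * ip i j := by
    intro i
    rw [← Finset.add_sum_erase _ _ (Finset.mem_univ i), hdiag i]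
    ring_nf
  have hRlow : ∀ i : Fin d,
      -(∑ j, α / d * (|c i| * |c j|)) ≤ ∑ j ∈ Finset.univ.erase i, c i * c j * ip i j := by
    intro i
    have h1 : ∑ j ∈ Finset.univ.erase i, -(α / d * (|c i| * |c j|))
        ≤ ∑ j ∈ Finset.univ.erase i, c i * c j * ip i j := by
      apply Finset.sum_le_sum
      intro j hj
      have hji : j ≠ i := Finset.ne_of_mem_erase hj
      have habs : |c i * c j * ip i j| ≤ α / d * (|c i| * |c j|) := by
        rw [abs_mul, abs_mul]
        have h := hip i j (Ne.symm hji)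
        calc |c i| * |c j| * |ip i j| ≤ |c i| * |c j| * (α / d) :=
              mul_le_mul_of_nonneg_left h (by positivity)
          _ = α / d * (|c i| * |c j|) := by ring
      linarith [neg_abs_le (c i * c j * ip i j)]
    have h2 : ∑ j ∈ Finset.univ.erase i, α / d * (|c i| * |c j|)
        ≤ ∑ j, α / d * (|c i| * |c j|) :=
      Finset.sum_le_sum_of_subset_of_nonneg (Finset.erase_subset _ _)
        (fun j _ _ => by positivity)
    calc -(∑ j, α / d * (|c i| * |c j|))
        ≤ -(∑ j ∈ Finset.univ.erase i, α / d * (|c i| * |c j|)) := neg_le_neg h2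
      _ = ∑ j ∈ Finset.univ.erase i, -(α / d * (|c i| * |c j|)) := by
          rw [Finset.sum_neg_distrib]
      _ ≤ _ := h1
  have h4 : ∑ i, ∑ j, α / d * (|c i| * |c j|) ≤ α * ∑ i, c i ^ 2 := by
    have e1 : ∑ i, ∑ j, α / d * (|c i| * |c j|)
        = α / d * ((∑ i, |c i|) * (∑ j, |c j|)) := by
      rw [Finset.sum_mul_sum, Finset.mul_sum]
      exact Finset.sum_congr rfl fun i _ => by rw [Finset.mul_sum]
    have e2 : (∑ i, |c i|) ^ 2 ≤ (d : ℝ) * ∑ i, c i ^ 2 := by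
      have := sq_sum_le_card_mul_sum_sq (s := Finset.univ) (f := fun i => |c i|)
      simpa [sq_abs] using this
    have hS : 0 ≤ ∑ i, c i ^ 2 := Finset.sum_nonneg fun i _ => sq_nonneg _
    rw [e1]
    calc α / d * ((∑ i, |c i|) * (∑ j, |c j|)) = α / d * (∑ i, |c i|) ^ 2 := by ring
      _ ≤ α / d * ((d : ℝ) * ∑ i, c i ^ 2) :=
          mul_le_mul_of_nonneg_left e2 (by positivity)
      _ = α * ∑ i, c i ^ 2 := by field_simp
  have hcross : -(α * ∑ i, c i ^ 2)
      ≤ ∑ i, ∑ j ∈ Finset.univ.erase i, c i * c j * ip i j := by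
    have h3 : ∑ i, -(∑ j, α / d * (|c i| * |c j|))
        ≤ ∑ i, ∑ j ∈ Finset.univ.erase i, c i * c j * ip i j :=
      Finset.sum_le_sum fun i _ => hRlow i
    rw [Finset.sum_neg_distrib] at h3
    linarith
  have hsum : ∑ i, ∑ j, c i * c j * ip i j
      = (∑ i, c i ^ 2) + ∑ i, ∑ j ∈ Finset.univ.erase i, c i * c j * ip i j := by
    rw [Finset.sum_congr rfl fun i _ => hsplit i, Finset.sum_add_distrib]
  rw [expand, hsum]
  linarith

theorem opNorm_diff_le_of_action_on_nearly_orthogonal_directions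
    {c d : ℕ} (α ε' : ℝ) (hα0 : 0 < α) (hα1 : α < 1)
    (A B : Matrix (Fin c) (Fin d) ℝ)
    (x₀ : EuclideanSpace ℝ (Fin d)) (u : Fin d → EuclideanSpace ℝ (Fin d))
    (hu : ∀ i, u i ≠ x₀)
    (hinner : ∀ i j : Fin d, i ≠ j →
      |(inner ℝ ((‖u i - x₀‖⁻¹ : ℝ) • (u i - x₀)) ((‖u j - x₀‖⁻¹ : ℝ) • (u j - x₀)) : ℝ)|
        ≤ α / d)
    (hact : ∀ i, ‖Matrix.toEuclideanLin (A - B) ((‖u i - x₀‖⁻¹ : ℝ) • (u i - x₀))‖ ≤ ε') :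
    matOpNorm (A - B) ≤ d * (1 - α) ^ (-(1/2 : ℝ)) * ε' := by
  classical
  set b : Fin d → EuclideanSpace ℝ (Fin d) := fun i => (‖u i - x₀‖⁻¹ : ℝ) • (u i - x₀)
    with hbdef
  have hb1 : ∀ i, ‖b i‖ = 1 := fun i => norm_smul_inv_norm (sub_ne_zero.mpr (hu i))
  rcases Nat.eq_zero_or_pos d with hd | hd
  · subst hd
    have h0 : matOpNorm (A - B) ≤ 0 := by
      rw [matOpNorm]
      exact ContinuousLinearMap.opNorm_le_bound _ le_rfl
        (fun x => by rw [Subsingleton.elim x 0]; simp)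
    calc matOpNorm (A - B) ≤ 0 := h0
      _ ≤ _ := by norm_num
  · have hε0 : 0 ≤ ε' := le_trans (norm_nonneg _) (hact ⟨0, hd⟩)
    have hα1' : 0 < 1 - α := by linarith
    have key := aux_key hα0.le hd b hb1 (fun i j hij => hinner i j hij)
    have hli : LinearIndependent ℝ b := by
      rw [Fintype.linearIndependent_iff]
      intro g hg i
      have hk := key g
      rw [hg] at hk
      simp only [norm_zero, ne_eq, OfNat.ofNat_ne_zero, not_false_eq_true, zero_pow] at hk
      have hS : ∑ j, g j ^ 2 ≤ 0 := by nlinarith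
      have hgi : g i ^ 2 ≤ 0 :=
        le_trans (Finset.single_le_sum (fun j _ => sq_nonneg (g j)) (Finset.mem_univ i)) hS
      nlinarith [sq_nonneg (g i)]
    have hcard : Fintype.card (Fin d) = Module.finrank ℝ (EuclideanSpace ℝ (Fin d)) := by
      simp
    haveI : Nonempty (Fin d) := ⟨⟨0, hd⟩⟩
    let β := basisOfLinearIndependentOfCardEqFinrank hli hcard
    have hβ : ∀ i, β i = b i := fun i => by
      simp [β, coe_basisOfLinearIndependentOfCardEqFinrank]
    have hrpow : (1 - α) ^ (-(1/2:ℝ)) = Real.sqrt ((1 - α)⁻¹) := by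
      rw [Real.rpow_neg hα1'.le, ← Real.sqrt_eq_rpow, Real.sqrt_inv]
    rw [matOpNorm]
    apply ContinuousLinearMap.opNorm_le_bound
    · refine mul_nonneg (mul_nonneg (by positivity) ?_) hε0
      rw [hrpow]; positivity
    · intro x
      set cx : Fin d → ℝ := fun i => β.repr x i with hcxdef
      have hx : x = ∑ i, cx i • b i := by
        conv_lhs => rw [← β.sum_repr x]
        exact Finset.sum_congr rfl fun i _ => by rw [hβ]
      have hkey := key cx
      rw [← hx] at hkey
      have hsum : ∑ i, cx i ^ 2 ≤ (1 - α)⁻¹ * ‖x‖ ^ 2 := by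
        have h := mul_le_mul_of_nonneg_left hkey (inv_pos.mpr hα1').le
        rwa [← mul_assoc, inv_mul_cancel₀ hα1'.ne', one_mul] at h
      have hci : ∀ i, |cx i| ≤ Real.sqrt ((1 - α)⁻¹) * ‖x‖ := by
        intro i
        have h1 : cx i ^ 2 ≤ (1 - α)⁻¹ * ‖x‖ ^ 2 :=
          le_trans (Finset.single_le_sum (fun j _ => sq_nonneg (cx j)) (Finset.mem_univ i))
            hsum
        calc |cx i| = Real.sqrt (cx i ^ 2) := (Real.sqrt_sq_eq_abs _).symm
          _ ≤ Real.sqrt ((1 - α)⁻¹ * ‖x‖ ^ 2) := Real.sqrt_le_sqrt h1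
          _ = Real.sqrt ((1 - α)⁻¹) * ‖x‖ := by
              rw [Real.sqrt_mul (by positivity), Real.sqrt_sq (norm_nonneg x)]
      have hTx : Matrix.toEuclideanLin (A - B) x
          = ∑ i, cx i • Matrix.toEuclideanLin (A - B) (b i) := by
        conv_lhs => rw [hx]
        rw [map_sum]
        exact Finset.sum_congr rfl fun i _ => by rw [map_smul]
      simp only [LinearMap.coe_toContinuousLinearMap']
      calc ‖Matrix.toEuclideanLin (A - B) x‖
          = ‖∑ i, cx i • Matrix.toEuclideanLin (A - B) (b i)‖ := by rw [hTx]
        _ ≤ ∑ i, ‖cx i • Matrix.toEuclideanLin (A - B) (b i)‖ := norm_sum_le _ _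
        _ = ∑ i, |cx i| * ‖Matrix.toEuclideanLin (A - B) (b i)‖ := by
            simp [norm_smul]
        _ ≤ ∑ _i : Fin d, (Real.sqrt ((1 - α)⁻¹) * ‖x‖) * ε' :=
            Finset.sum_le_sum fun i _ =>
              mul_le_mul (hci i) (hact i) (norm_nonneg _)
                (mul_nonneg (Real.sqrt_nonneg _) (norm_nonneg _))
        _ = d * (1 - α) ^ (-(1/2:ℝ)) * ε' * ‖x‖ := by
            rw [Finset.sum_const, Finset.card_univ, Fintype.card_fin, nsmul_eq_mul, hrpow]
            ring
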